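/- In the nested one-parameter setting, for every t ∈ J one has P_t^{(1)} ∘ D_t ∘ P_t^{(2)} = 0 as a bounded linear operator from B₂ to B₁; that is, the spectral projection composed on both sides of the strong derivative of the operator family vanishes: P_t (∂_t L_t) P_t = 0. -/

import Mathlib

open ContinuousLinearMap Filter Topology Metric

/-- Resolvent operator `(z·I - A)⁻¹` (via `Ring.inverse`). -/
noncomputable def res {E : Type*} [NormedAddCommGroup E] [NormedSpace ℂ E]
    (z : ℂ) (A : E →L[ℂ] E) : E →L[ℂ] E :=
  Ring.inverse (algebraMap ℂ (E →L[ℂ] E) z - A)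

section Aux

variable {A : Type*} [NormedRing A] [NormedAlgebra ℂ A] [CompleteSpace A]

/-- Explicit two-sided inverse of `z - (P + N)` in terms of the resolvent of `N`. -/
lemma gap_unit_aux {P N : A} (hPP : P * P = P) (hPN : P * N = 0) (hNP : N * P = 0)
    {z : ℂ} (hz1 : z ≠ 1) (hzN : z ∈ resolventSet ℂ N) :
    (algebraMap ℂ A z - (P + N)) * ((z - 1)⁻¹ • P + resolvent N z * (1 - P)) = 1 ∧
    ((z - 1)⁻¹ • P + resolvent N z * (1 - P)) * (algebraMap ℂ A z - (P + N)) = 1 := by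
  have hzN' : IsUnit (algebraMap ℂ A z - N) := hzN
  set a : A := algebraMap ℂ A z with ha
  set Rn : A := resolvent N z with hRn
  have hm1 : (a - N) * Rn = 1 := Ring.mul_inverse_cancel _ hzN'
  have hm2 : Rn * (a - N) = 1 := Ring.inverse_mul_cancel _ hzN'
  have haP : a * P = P * a := Algebra.commutes z P
  have hzsub : (z - 1 : ℂ) ≠ 0 := sub_ne_zero.mpr hz1
  have haPz : a * P = z • P := by
    rw [ha, Algebra.algebraMap_eq_smul_one, smul_mul_assoc, one_mul]
  have hPaz : P * a = z • P := by rw [← haP, haPz]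
  have hcomm : (a - N) * P = P * (a - N) := by
    rw [sub_mul, mul_sub, hNP, hPN, sub_zero, sub_zero, haP]
  have hPRn : P * Rn = Rn * P := by
    calc P * Rn = (Rn * (a - N)) * (P * Rn) := by rw [hm2, one_mul]
      _ = Rn * (((a - N) * P) * Rn) := by simp only [mul_assoc]
      _ = Rn * ((P * (a - N)) * Rn) := by rw [hcomm]
      _ = (Rn * P) * ((a - N) * Rn) := by simp only [mul_assoc]
      _ = Rn * P := by rw [hm1, mul_one]
  have hsplit : a - (P + N) = (a - N) - P := by abel
  have hP1P : P * (1 - P) = 0 := by rw [mul_sub, mul_one, hPP, sub_self]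
  have h1PP : (1 - P) * P = 0 := by rw [sub_mul, one_mul, hPP, sub_self]
  constructor
  · rw [mul_add]
    have e1 : (a - (P + N)) * ((z - 1)⁻¹ • P) = P := by
      rw [mul_smul_comm]
      have : (a - (P + N)) * P = (z - 1) • P := by
        rw [sub_mul, add_mul, hPP, hNP, add_zero, haPz, sub_smul, one_smul]
      rw [this, smul_smul, inv_mul_cancel₀ hzsub, one_smul]
    have e2 : (a - (P + N)) * (Rn * (1 - P)) = 1 - P := by
      rw [hsplit, sub_mul, ← mul_assoc, hm1, one_mul, ← mul_assoc, hPRn, mul_assoc,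
        hP1P, mul_zero, sub_zero]
    rw [e1, e2]; abel
  · rw [add_mul]
    have e1 : ((z - 1)⁻¹ • P) * (a - (P + N)) = P := by
      rw [smul_mul_assoc]
      have : P * (a - (P + N)) = (z - 1) • P := by
        rw [mul_sub, mul_add, hPP, hPN, add_zero, hPaz, sub_smul, one_smul]
      rw [this, smul_smul, inv_mul_cancel₀ hzsub, one_smul]
    have e2 : (Rn * (1 - P)) * (a - (P + N)) = 1 - P := by
      rw [hsplit]
      have hstep : (1 - P) * ((a - N) - P) = (a - N) - (a - N) * P := by
        rw [sub_mul, one_mul, mul_sub, hPP, ← hcomm]; abel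
      rw [mul_assoc, hstep, mul_sub, hm2, ← mul_assoc, hm2, one_mul]
    rw [e1, e2]; abel

/-- `z - (P + N)` is invertible off the spectrum, with explicit `Ring.inverse`. -/
lemma gap_inverse_eq {P N : A} (hPP : P * P = P) (hPN : P * N = 0) (hNP : N * P = 0)
    {z : ℂ} (hz1 : z ≠ 1) (hzN : z ∈ resolventSet ℂ N) :
    Ring.inverse (algebraMap ℂ A z - (P + N)) =
      (z - 1)⁻¹ • P + resolvent N z * (1 - P) := by
  obtain ⟨h1, h2⟩ := gap_unit_aux hPP hPN hNP hz1 hzN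
  exact Ring.inverse_unit ⟨algebraMap ℂ A z - (P + N),
    (z - 1)⁻¹ • P + resolvent N z * (1 - P), h1, h2⟩

/-- Additivity of the circle integral. -/
lemma circleIntegral_add' {E : Type*} [NormedAddCommGroup E] [NormedSpace ℂ E]
    {f g : ℂ → E} {c : ℂ} {R : ℝ} (hf : CircleIntegrable f c R)
    (hg : CircleIntegrable g c R) :
    (∮ z in C(c, R), (f z + g z)) = (∮ z in C(c, R), f z) + ∮ z in C(c, R), g z := by
  have hf' : IntervalIntegrable (fun θ : ℝ => deriv (circleMap c R) θ • f (circleMap c R θ))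
      MeasureTheory.volume 0 (2 * Real.pi) := hf.out
  have hg' : IntervalIntegrable (fun θ : ℝ => deriv (circleMap c R) θ • g (circleMap c R θ))
      MeasureTheory.volume 0 (2 * Real.pi) := hg.out
  simp only [circleIntegral, smul_add]
  exact intervalIntegral.integral_add hf' hg'

/-- A continuous linear map commutes with the circle integral. -/
lemma clm_circleIntegral {E F : Type*} [NormedAddCommGroup E] [NormedSpace ℂ E]
    [CompleteSpace E] [NormedAddCommGroup F] [NormedSpace ℂ F] [CompleteSpace F]
    (Φ : E →L[ℂ] F) {f : ℂ → E} {c : ℂ} {R : ℝ} (hf : CircleIntegrable f c R) :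
    Φ (∮ z in C(c, R), f z) = ∮ z in C(c, R), Φ (f z) := by
  have hf' : IntervalIntegrable (fun θ : ℝ => deriv (circleMap c R) θ • f (circleMap c R θ))
      MeasureTheory.volume 0 (2 * Real.pi) := hf.out
  simp only [circleIntegral]
  rw [← Φ.intervalIntegral_comp_comm hf']
  simp only [map_smul]

/-- Main spectral computation: continuity of the resolvent of `P + N` on the circle, and
the Riesz projection formula. -/
lemma gap_main {P N : A} (hPP : P * P = P) (hPN : P * N = 0) (hNP : N * P = 0)
    {η : ℝ} (hη : η ∈ Set.Ioo (0 : ℝ) 1)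
    (hrad : spectralRadius ℂ N ≤ ENNReal.ofReal η) :
    ContinuousOn (fun z => Ring.inverse (algebraMap ℂ A z - (P + N)))
      (sphere (1 : ℂ) ((1 - η) / 2)) ∧
    (∮ z in C(1, (1 - η) / 2), Ring.inverse (algebraMap ℂ A z - (P + N))) =
      (2 * Real.pi * Complex.I : ℂ) • P := by
  set r : ℝ := (1 - η) / 2 with hrdef
  have hr : 0 < r := div_pos (by linarith [hη.2]) two_pos
  have hres : ∀ z ∈ closedBall (1 : ℂ) r, z ∈ resolventSet ℂ N := by
    intro z hz
    apply spectrum.mem_resolventSet_of_spectralRadius_lt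
    refine lt_of_le_of_lt hrad ?_
    have h1 : ‖(1 : ℂ)‖ - ‖z‖ ≤ ‖(1 : ℂ) - z‖ := norm_sub_norm_le _ _
    have h2 : ‖(1 : ℂ) - z‖ ≤ r := by
      rw [norm_sub_rev, ← dist_eq_norm]; exact mem_closedBall.mp hz
    have hone : ‖(1 : ℂ)‖ = 1 := norm_one
    have hηz : η < ‖z‖ := by
      have : 1 - r ≤ ‖z‖ := by linarith
      have : (1 + η) / 2 ≤ ‖z‖ := by rw [hrdef] at this; linarith
      linarith [hη.2]
    calc ENNReal.ofReal η < ENNReal.ofReal ‖z‖ :=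
          (ENNReal.ofReal_lt_ofReal_iff (lt_trans hη.1 hηz)).mpr hηz
      _ = (‖z‖₊ : ENNReal) := by rw [ofReal_norm, enorm_eq_nnnorm]
  have hz1 : ∀ z ∈ sphere (1 : ℂ) r, z ≠ 1 := by
    intro z hz h
    rw [mem_sphere, h, dist_self] at hz
    exact hr.ne hz
  have hcontRn : ContinuousOn (fun z => resolvent N z) (closedBall (1 : ℂ) r) := fun z hz =>
    ((spectrum.hasDerivAt_resolvent (hres z hz)).differentiableAt.continuousAt).continuousWithinAt
  have hcong : Set.EqOn (fun z => Ring.inverse (algebraMap ℂ A z - (P + N)))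
      (fun z => (z - 1)⁻¹ • P + resolvent N z * (1 - P)) (sphere (1 : ℂ) r) := fun z hz =>
    gap_inverse_eq hPP hPN hNP (hz1 z hz) (hres z (sphere_subset_closedBall hz))
  have hcont1 : ContinuousOn (fun z : ℂ => (z - 1)⁻¹ • P) (sphere (1 : ℂ) r) :=
    (((continuousOn_id.sub continuousOn_const).inv₀
      (fun z hz => sub_ne_zero.mpr (hz1 z hz))).smul continuousOn_const)
  have hcont2 : ContinuousOn (fun z => resolvent N z * (1 - P)) (sphere (1 : ℂ) r) :=
    (hcontRn.mono sphere_subset_closedBall).mul continuousOn_const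
  have hcontg : ContinuousOn (fun z => (z - 1)⁻¹ • P + resolvent N z * (1 - P))
      (sphere (1 : ℂ) r) := hcont1.add hcont2
  refine ⟨hcontg.congr hcong, ?_⟩
  rw [circleIntegral.integral_congr hr.le hcong]
  have hi₁ : CircleIntegrable (fun z : ℂ => (z - 1)⁻¹ • P) 1 r :=
    hcont1.circleIntegrable hr.le
  have hi₂ : CircleIntegrable (fun z => resolvent N z * (1 - P)) 1 r :=
    hcont2.circleIntegrable hr.le
  rw [circleIntegral_add' hi₁ hi₂]
  have h₁ : (∮ z in C(1, r), (z - 1)⁻¹ • P) = (2 * Real.pi * Complex.I : ℂ) • P := by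
    rw [circleIntegral.integral_smul_const,
      circleIntegral.integral_sub_inv_of_mem_ball (mem_ball_self hr)]
  have h₂ : (∮ z in C(1, r), resolvent N z * (1 - P)) = 0 := by
    apply Complex.circleIntegral_eq_zero_of_differentiable_on_off_countable hr.le
      Set.countable_empty (hcontRn.mul continuousOn_const)
    intro z hz
    exact ((spectrum.hasDerivAt_resolvent
      (hres z (ball_subset_closedBall hz.1))).differentiableAt).mul_const _
  rw [h₁, h₂, add_zero]

end Aux

/-- in the nested one-parameter setting (hypotheses (H1)-(H3)), for every
`t ∈ J = (-ε,ε)` one has `P_t ∘ (∂ₜ L_t) ∘ P_t = 0` as a bounded operator `B₂ → B₁`. -/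
theorem stmt9
    {B₀ B₁ B₂ : Type*}
    [NormedAddCommGroup B₀] [NormedSpace ℂ B₀] [CompleteSpace B₀]
    [NormedAddCommGroup B₁] [NormedSpace ℂ B₁] [CompleteSpace B₁]
    [NormedAddCommGroup B₂] [NormedSpace ℂ B₂] [CompleteSpace B₂]
    (j₀ : B₁ →L[ℂ] B₀) (j₁ : B₂ →L[ℂ] B₁)
    (hj₀ : Function.Injective j₀) (hj₁ : Function.Injective j₁)
    (ε : ℝ) (hε : 0 < ε)
    (L₀ : ℝ → B₀ →L[ℂ] B₀) (L₁ : ℝ → B₁ →L[ℂ] B₁) (L₂ : ℝ → B₂ →L[ℂ] B₂)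
    (hcomp₀ : ∀ t ∈ Set.Ioo (-ε) ε, j₀ ∘L L₁ t = L₀ t ∘L j₀)
    (hcomp₁ : ∀ t ∈ Set.Ioo (-ε) ε, j₁ ∘L L₂ t = L₁ t ∘L j₁)
    (η : ℝ) (hη : η ∈ Set.Ioo (0 : ℝ) 1)
    (P₁ N₁ : ℝ → B₁ →L[ℂ] B₁) (P₂ N₂ : ℝ → B₂ →L[ℂ] B₂)
    -- (H1): (1,η)-gap decompositions on B₁ and B₂, compatible with the embedding
    (hgap₁ : ∀ t ∈ Set.Ioo (-ε) ε,
      P₁ t * P₁ t = P₁ t ∧ L₁ t * P₁ t = P₁ t ∧ P₁ t * L₁ t = P₁ t ∧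
      P₁ t * N₁ t = 0 ∧ N₁ t * P₁ t = 0 ∧ L₁ t = P₁ t + N₁ t ∧
      spectralRadius ℂ (N₁ t) ≤ ENNReal.ofReal η)
    (hgap₂ : ∀ t ∈ Set.Ioo (-ε) ε,
      P₂ t * P₂ t = P₂ t ∧ L₂ t * P₂ t = P₂ t ∧ P₂ t * L₂ t = P₂ t ∧
      P₂ t * N₂ t = 0 ∧ N₂ t * P₂ t = 0 ∧ L₂ t = P₂ t + N₂ t ∧
      spectralRadius ℂ (N₂ t) ≤ ENNReal.ofReal η)
    (hPcomp : ∀ t ∈ Set.Ioo (-ε) ε, j₁ ∘L P₂ t = P₁ t ∘L j₁)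
    -- (H2): strong derivative D t = ∂ₜ L_t as a bounded operator B₂ → B₁
    (D : ℝ → B₂ →L[ℂ] B₁)
    (hH2 : ∀ t ∈ Set.Ioo (-ε) ε, ∀ φ : B₂,
      Tendsto (fun s : ℝ => (s - t)⁻¹ • (j₁ (L₂ s φ) - j₁ (L₂ t φ)))
        (𝓝[Set.Ioo (-ε) ε \ {t}] t) (𝓝 (D t φ)))
    -- (H3): uniform continuity of the resolvent on γ, as operators B₁ → B₀
    (hH3 : ∀ t ∈ Set.Ioo (-ε) ε,
      Tendsto (fun s : ℝ => ⨆ z ∈ sphere (1 : ℂ) ((1 - η) / 2),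
          ‖j₀ ∘L (res z (L₁ s) - res z (L₁ t))‖)
        (𝓝[Set.Ioo (-ε) ε] t) (𝓝 0))
    :
    ∀ t ∈ Set.Ioo (-ε) ε, P₁ t ∘L D t ∘L P₂ t = 0 := by
  intro t ht
  have hr : 0 < (1 - η) / 2 := div_pos (by linarith [hη.2]) two_pos
  -- continuity of the resolvent on the circle, for each parameter in J
  have hcont : ∀ s ∈ Set.Ioo (-ε) ε,
      ContinuousOn (fun z => res z (L₁ s)) (sphere (1 : ℂ) ((1 - η) / 2)) := by
    intro s hs
    obtain ⟨hPP, _, _, hPN, hNP, hLd, hrad⟩ := hgap₁ s hs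
    have := (gap_main hPP hPN hNP hη hrad).1
    simpa only [res, hLd] using this
  -- Riesz projection formula, for each parameter in J
  have hriesz : ∀ s ∈ Set.Ioo (-ε) ε,
      (∮ z in C(1, (1 - η) / 2), res z (L₁ s)) = (2 * Real.pi * Complex.I : ℂ) • P₁ s := by
    intro s hs
    obtain ⟨hPP, _, _, hPN, hNP, hLd, hrad⟩ := hgap₁ s hs
    have := (gap_main hPP hPN hNP hη hrad).2
    simpa only [res, hLd] using this
  -- Step D: operator-norm continuity of the projection, after composing with j₀
  have hD : Tendsto (fun s => ‖j₀ ∘L (P₁ s - P₁ t)‖)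
      (𝓝[Set.Ioo (-ε) ε] t) (𝓝 0) := by
    have hest : ∀ s ∈ Set.Ioo (-ε) ε, ‖j₀ ∘L (P₁ s - P₁ t)‖ ≤
        (1 - η) / 2 * ⨆ z ∈ sphere (1 : ℂ) ((1 - η) / 2),
          ‖j₀ ∘L (res z (L₁ s) - res z (L₁ t))‖ := by
      intro s hs
      have hFc : ContinuousOn (fun z => ‖j₀ ∘L (res z (L₁ s) - res z (L₁ t))‖)
          (sphere (1 : ℂ) ((1 - η) / 2)) := by
        have h1 : ContinuousOn (fun z => res z (L₁ s) - res z (L₁ t))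
            (sphere (1 : ℂ) ((1 - η) / 2)) := (hcont s hs).sub (hcont t ht)
        have h2 : ContinuousOn (fun z => j₀ ∘L (res z (L₁ s) - res z (L₁ t)))
            (sphere (1 : ℂ) ((1 - η) / 2)) :=
          ((compL ℂ B₁ B₁ B₀ j₀).continuous.comp_continuousOn h1).congr
            (fun z _ => by simp [Function.comp, compL_apply])
        exact h2.norm
      obtain ⟨C, hC⟩ := (isCompact_sphere (1 : ℂ) ((1 - η) / 2)).bddAbove_image hFc
      have hbdd : BddAbove (Set.range fun z =>
          ⨆ _ : z ∈ sphere (1 : ℂ) ((1 - η) / 2),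
            ‖j₀ ∘L (res z (L₁ s) - res z (L₁ t))‖) := by
        refine ⟨max C 0, ?_⟩
        rintro x ⟨z, rfl⟩
        by_cases hz : z ∈ sphere (1 : ℂ) ((1 - η) / 2)
        · refine le_trans (le_of_eq ?_) (le_max_of_le_left (hC ⟨z, hz, rfl⟩))
          exact ciSup_pos (p := z ∈ sphere (1 : ℂ) ((1 - η) / 2))
            (f := fun _ => ‖j₀ ∘L (res z (L₁ s) - res z (L₁ t))‖) hz
        · haveI : IsEmpty (z ∈ sphere (1 : ℂ) ((1 - η) / 2)) := ⟨hz⟩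
          refine le_trans (le_of_eq ?_) (le_max_right _ _)
          exact Real.iSup_of_isEmpty _
      have hpt : ∀ z ∈ sphere (1 : ℂ) ((1 - η) / 2),
          ‖j₀ ∘L (res z (L₁ s) - res z (L₁ t))‖ ≤
          ⨆ z ∈ sphere (1 : ℂ) ((1 - η) / 2),
            ‖j₀ ∘L (res z (L₁ s) - res z (L₁ t))‖ := by
        intro z hz
        refine le_trans (le_of_eq ?_) (le_ciSup hbdd z)
        exact (ciSup_pos (p := z ∈ sphere (1 : ℂ) ((1 - η) / 2))
          (f := fun _ => ‖j₀ ∘L (res z (L₁ s) - res z (L₁ t))‖) hz).symm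
      have i_s : CircleIntegrable (fun z => res z (L₁ s)) 1 ((1 - η) / 2) :=
        (hcont s hs).circleIntegrable hr.le
      have i_t : CircleIntegrable (fun z => res z (L₁ t)) 1 ((1 - η) / 2) :=
        (hcont t ht).circleIntegrable hr.le
      have iΦs : CircleIntegrable (fun z => (compL ℂ B₁ B₁ B₀ j₀) (res z (L₁ s)))
          1 ((1 - η) / 2) :=
        ((compL ℂ B₁ B₁ B₀ j₀).continuous.comp_continuousOn
          (hcont s hs)).circleIntegrable hr.le
      have iΦt : CircleIntegrable (fun z => (compL ℂ B₁ B₁ B₀ j₀) (res z (L₁ t)))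
          1 ((1 - η) / 2) :=
        ((compL ℂ B₁ B₁ B₀ j₀).continuous.comp_continuousOn
          (hcont t ht)).circleIntegrable hr.le
      have hΦ : ∀ g : B₁ →L[ℂ] B₁, (compL ℂ B₁ B₁ B₀ j₀) g = j₀ ∘L g := fun g => rfl
      have key : (2 * Real.pi * Complex.I : ℂ) • (j₀ ∘L (P₁ s - P₁ t)) =
          ∮ z in C(1, (1 - η) / 2), (j₀ ∘L (res z (L₁ s) - res z (L₁ t))) := by
        have es : (∮ z in C(1, (1 - η) / 2), (compL ℂ B₁ B₁ B₀ j₀) (res z (L₁ s))) =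
            (2 * Real.pi * Complex.I : ℂ) • (j₀ ∘L P₁ s) := by
          rw [← clm_circleIntegral (compL ℂ B₁ B₁ B₀ j₀) i_s, hriesz s hs, map_smul, hΦ]
        have et : (∮ z in C(1, (1 - η) / 2), (compL ℂ B₁ B₁ B₀ j₀) (res z (L₁ t))) =
            (2 * Real.pi * Complex.I : ℂ) • (j₀ ∘L P₁ t) := by
          rw [← clm_circleIntegral (compL ℂ B₁ B₁ B₀ j₀) i_t, hriesz t ht, map_smul, hΦ]
        have hsubint := circleIntegral.integral_sub iΦs iΦt
        have heq : ∀ z : ℂ, (compL ℂ B₁ B₁ B₀ j₀) (res z (L₁ s)) -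
            (compL ℂ B₁ B₁ B₀ j₀) (res z (L₁ t)) =
            j₀ ∘L (res z (L₁ s) - res z (L₁ t)) := fun z => by
          rw [hΦ, hΦ, comp_sub]
        calc (2 * Real.pi * Complex.I : ℂ) • (j₀ ∘L (P₁ s - P₁ t))
            = (2 * Real.pi * Complex.I : ℂ) • (j₀ ∘L P₁ s) -
              (2 * Real.pi * Complex.I : ℂ) • (j₀ ∘L P₁ t) := by
              rw [comp_sub, smul_sub]
          _ = (∮ z in C(1, (1 - η) / 2), (compL ℂ B₁ B₁ B₀ j₀) (res z (L₁ s))) -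
              ∮ z in C(1, (1 - η) / 2), (compL ℂ B₁ B₁ B₀ j₀) (res z (L₁ t)) := by
              rw [es, et]
          _ = ∮ z in C(1, (1 - η) / 2), ((compL ℂ B₁ B₁ B₀ j₀) (res z (L₁ s)) -
              (compL ℂ B₁ B₁ B₀ j₀) (res z (L₁ t))) := hsubint.symm
          _ = ∮ z in C(1, (1 - η) / 2), (j₀ ∘L (res z (L₁ s) - res z (L₁ t))) := by
              simp only [heq]
      have hbound : ‖∮ z in C(1, (1 - η) / 2),
          (j₀ ∘L (res z (L₁ s) - res z (L₁ t)))‖ ≤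
          2 * Real.pi * ((1 - η) / 2) * ⨆ z ∈ sphere (1 : ℂ) ((1 - η) / 2),
            ‖j₀ ∘L (res z (L₁ s) - res z (L₁ t))‖ :=
        circleIntegral.norm_integral_le_of_norm_le_const hr.le hpt
      have hnorm2pi : ‖(2 * Real.pi * Complex.I : ℂ)‖ = 2 * Real.pi := by
        simp [norm_mul, Complex.norm_I, abs_of_nonneg Real.pi_nonneg]
      have hsmulnorm : ‖(2 * Real.pi * Complex.I : ℂ) • (j₀ ∘L (P₁ s - P₁ t))‖ =
          2 * Real.pi * ‖j₀ ∘L (P₁ s - P₁ t)‖ := by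
        have := norm_smul (2 * Real.pi * Complex.I : ℂ) (j₀ ∘L (P₁ s - P₁ t))
        rw [hnorm2pi] at this
        exact this
      have hfinal : 2 * Real.pi * ‖j₀ ∘L (P₁ s - P₁ t)‖ ≤
          2 * Real.pi * (((1 - η) / 2) * ⨆ z ∈ sphere (1 : ℂ) ((1 - η) / 2),
            ‖j₀ ∘L (res z (L₁ s) - res z (L₁ t))‖) := by
        rw [← hsmulnorm, key, ← mul_assoc]
        exact hbound
      have hπ : (0 : ℝ) < 2 * Real.pi := by positivity
      exact le_of_mul_le_mul_left hfinal hπ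
    apply squeeze_zero' (Eventually.of_forall fun s => norm_nonneg _)
      (g := fun s => (1 - η) / 2 * ⨆ z ∈ sphere (1 : ℂ) ((1 - η) / 2),
        ‖j₀ ∘L (res z (L₁ s) - res z (L₁ t))‖)
    · filter_upwards [self_mem_nhdsWithin] with s hs
      exact hest s hs
    · have h0 := (hH3 t ht).const_mul ((1 - η) / 2)
      rw [mul_zero] at h0
      exact h0
  -- now the main argument
  ext φ
  set ψ : B₂ := P₂ t φ with hψdef
  have hψfix : L₂ t ψ = ψ := by
    have h := (hgap₂ t ht).2.1
    calc L₂ t ψ = (L₂ t * P₂ t) φ := by rw [ContinuousLinearMap.mul_apply]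
      _ = P₂ t φ := by rw [h]
  set y : ℝ → B₁ := fun s => (s - t)⁻¹ • (j₁ (L₂ s ψ) - j₁ (L₂ t ψ)) with hydef
  have hyt : Tendsto y (𝓝[Set.Ioo (-ε) ε \ {t}] t) (𝓝 (D t ψ)) := hH2 t ht ψ
  have hPy : ∀ s ∈ Set.Ioo (-ε) ε, P₁ s (y s) = 0 := by
    intro s hs
    have h1 : j₁ (L₂ s ψ) = L₁ s (j₁ ψ) := by
      have := congrArg (fun T : B₂ →L[ℂ] B₁ => T ψ) (hcomp₁ s hs)
      simpa using this
    have h2 : P₁ s (L₁ s (j₁ ψ)) = P₁ s (j₁ ψ) := by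
      have h := (hgap₁ s hs).2.2.1
      calc P₁ s (L₁ s (j₁ ψ)) = (P₁ s * L₁ s) (j₁ ψ) := by rw [ContinuousLinearMap.mul_apply]
        _ = P₁ s (j₁ ψ) := by rw [h]
    rw [hydef]
    simp only [hψfix, h1]
    rw [(P₁ s).map_smul_of_tower, map_sub, h2, sub_self, smul_zero]
  have hjq : ∀ s ∈ Set.Ioo (-ε) ε,
      j₀ (P₁ t (y s)) = (j₀ ∘L (P₁ t - P₁ s)) (y s) := by
    intro s hs
    simp [sub_apply, hPy s hs]
  have hzero : Tendsto (fun s => j₀ (P₁ t (y s)))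
      (𝓝[Set.Ioo (-ε) ε \ {t}] t) (𝓝 0) := by
    apply squeeze_zero_norm'
      (a := fun s => ‖j₀ ∘L (P₁ t - P₁ s)‖ * ‖y s‖)
    · filter_upwards [self_mem_nhdsWithin] with s hs
      rw [hjq s hs.1]
      exact (j₀ ∘L (P₁ t - P₁ s)).le_opNorm (y s)
    · have h1 : Tendsto (fun s => ‖j₀ ∘L (P₁ t - P₁ s)‖)
          (𝓝[Set.Ioo (-ε) ε \ {t}] t) (𝓝 0) := by
        have heq : ∀ s, ‖j₀ ∘L (P₁ t - P₁ s)‖ = ‖j₀ ∘L (P₁ s - P₁ t)‖ := by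
          intro s
          rw [show P₁ t - P₁ s = -(P₁ s - P₁ t) by abel, comp_neg, norm_neg]
        simp only [heq]
        exact hD.mono_left (nhdsWithin_mono t Set.diff_subset)
      have := h1.mul hyt.norm
      simpa using this
  have hlim : Tendsto (fun s => j₀ (P₁ t (y s)))
      (𝓝[Set.Ioo (-ε) ε \ {t}] t) (𝓝 (j₀ (P₁ t (D t ψ)))) :=
    (j₀.continuous.tendsto _).comp (((P₁ t).continuous.tendsto _).comp hyt)
  have hneb : (𝓝[Set.Ioo (-ε) ε \ {t}] t).NeBot := by
    have hJn : Set.Ioo (-ε) ε ∈ 𝓝 t := isOpen_Ioo.mem_nhds ht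
    have heq : 𝓝[Set.Ioo (-ε) ε \ {t}] t = 𝓝[{t}ᶜ] t := by
      rw [show Set.Ioo (-ε) ε \ {t} = {t}ᶜ ∩ Set.Ioo (-ε) ε by
        rw [Set.diff_eq, Set.inter_comm]]
      exact nhdsWithin_inter_of_mem' (nhdsWithin_le_nhds hJn)
    rw [heq]
    infer_instance
  have hfin : j₀ (P₁ t (D t ψ)) = 0 := tendsto_nhds_unique hlim hzero
  have : P₁ t (D t ψ) = 0 := hj₀ (by rw [hfin, map_zero])
  simpa using this
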